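/- Let G be a finite group and H₁, H₂ Gassmann equivalent subgroups of G. Then for every cyclic subgroup C of G, the coset types of (G,H₁,C) and (G,H₂,C) coincide: for every natural number k, the number of double cosets d in H₁\G/C whose cardinality (as a subset of G) equals k·|H₁| is the same as the number of double cosets d in H₂\G/C whose cardinality equals k·|H₂|. (Note that Gassmann equivalence forces |H₁| = |H₂|.) -/

import Mathlib

set_option linter.unusedSectionVars false

open MulAction Subgroup Pointwise

/-- Two subgroups `H₁`, `H₂` of a group `G` are *Gassmann equivalent* in `G` if every
conjugacy class of `G` meets `H₁` and `H₂` in the same number of elements. -/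
def Subgroup.IsGassmannEquivalent {G : Type*} [Group G] (H₁ H₂ : Subgroup G) : Prop :=
  ∀ g : G, Nat.card {h : G // h ∈ H₁ ∧ IsConj g h} = Nat.card {h : G // h ∈ H₂ ∧ IsConj g h}

section helpers

variable {G : Type*} [Group G] [Finite G]

omit [Finite G] in
lemma card_preimage_mk (H : Subgroup G) (t : Set (G ⧸ H)) :
    Nat.card ((QuotientGroup.mk : G → G ⧸ H) ⁻¹' t) = Nat.card H * Nat.card t := by
  rw [Nat.card_congr (QuotientGroup.preimageMkEquivSubgroupProdSet H t), Nat.card_prod]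

omit [Finite G] in
/-- The conjugation fibration: the set of elements conjugating `g` into `H` has cardinality
`|Z_G(g)| · |H ∩ cl(g)|`. -/
lemma card_conj_in (H : Subgroup G) (g : G) :
    Nat.card {x : G // x * g * x⁻¹ ∈ H} =
      Nat.card (Subgroup.centralizer {g}) * Nat.card {h : G // h ∈ H ∧ IsConj g h} := by
  classical
  set Z := Subgroup.centralizer ({g} : Set G) with hZ
  have hlift : ∀ a b : G, QuotientGroup.leftRel Z a b → a * g * a⁻¹ = b * g * b⁻¹ := by
    intro a b hab
    have hab' : a⁻¹ * b ∈ Z := QuotientGroup.leftRel_apply.mp hab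
    have hc := (Subgroup.mem_centralizer_iff.mp hab') g (Set.mem_singleton g)
    have h2 : b * g * b⁻¹ = a * (g * (a⁻¹ * b)) * b⁻¹ := by rw [hc]; group
    rw [h2]; group
  let q : G ⧸ Z → G := fun u => Quotient.liftOn' u (fun x => x * g * x⁻¹) hlift
  have hq : ∀ x : G, q (QuotientGroup.mk x) = x * g * x⁻¹ := fun x => rfl
  have hqinj : Function.Injective q := by
    intro u v huv
    obtain ⟨a, rfl⟩ := QuotientGroup.mk_surjective u
    obtain ⟨b, rfl⟩ := QuotientGroup.mk_surjective v
    rw [hq, hq] at huv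
    refine QuotientGroup.eq.mpr ?_
    refine Subgroup.mem_centralizer_iff.mpr ?_
    rintro x rfl
    have : x * a⁻¹ = a⁻¹ * (b * x * b⁻¹) := by
      rw [← huv]; group
    calc x * (a⁻¹ * b) = x * a⁻¹ * b := by group
    _ = a⁻¹ * (b * x * b⁻¹) * b := by rw [this]
    _ = a⁻¹ * b * x := by group
  have hpre : {x : G | x * g * x⁻¹ ∈ H} = (QuotientGroup.mk : G → G ⧸ Z) ⁻¹' {u | q u ∈ H} := by
    ext x; simp [hq]
  have h1 : Nat.card {x : G // x * g * x⁻¹ ∈ H} = Nat.card Z * Nat.card {u : G ⧸ Z // q u ∈ H} := by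
    exact (Nat.card_congr (Equiv.setCongr hpre)).trans (card_preimage_mk Z {u | q u ∈ H})
  rw [h1]
  congr 1
  refine Nat.card_congr (Equiv.ofBijective (fun u => ⟨q u.1, u.2, ?_⟩) ⟨?_, ?_⟩)
  · obtain ⟨a, ha⟩ := QuotientGroup.mk_surjective u.1
    exact isConj_iff.mpr ⟨a, by rw [← ha, hq]⟩
  · intro u v huv
    exact Subtype.ext (hqinj (congrArg Subtype.val huv))
  · rintro ⟨h, hH, hconj⟩
    obtain ⟨c, hc⟩ := isConj_iff.mp hconj
    exact ⟨⟨QuotientGroup.mk c, show q (QuotientGroup.mk c) ∈ H by rw [hq, hc]; exact hH⟩,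
      Subtype.ext (by simp only [hq, hc])⟩

/-- Gassmann equivalent subgroups have the same cardinality. -/
lemma card_eq_of_gassmann {H₁ H₂ : Subgroup G} (h : H₁.IsGassmannEquivalent H₂) :
    Nat.card H₁ = Nat.card H₂ := by
  classical
  have := Fintype.ofFinite G
  have key : ∀ H : Subgroup G, Nat.card H =
      ∑ K : ConjClasses G, Nat.card {h : G // h ∈ H ∧ IsConj (Quotient.out K) h} := by
    intro H
    have e1 : {h : G // h ∈ H} ≃ Σ K : ConjClasses G, {a : {h : G // h ∈ H} // ConjClasses.mk a.1 = K} :=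
      (Equiv.sigmaFiberEquiv (fun a : {h : G // h ∈ H} => ConjClasses.mk a.1)).symm
    rw [Nat.card_congr e1, Nat.card_eq_fintype_card, Fintype.card_sigma]
    refine Finset.sum_congr rfl (fun K _ => ?_)
    rw [← Nat.card_eq_fintype_card]
    refine Nat.card_congr ((Equiv.subtypeSubtypeEquivSubtypeInter (· ∈ H)
      (fun x => ConjClasses.mk x = K)).trans (Equiv.subtypeEquivRight (fun x => ?_)))
    have hout : ConjClasses.mk (Quotient.out K) = K := by
      rw [← ConjClasses.quotient_mk_eq_mk]; exact Quotient.out_eq (s := IsConj.setoid G) K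
    constructor
    · rintro ⟨hx, hK⟩
      exact ⟨hx, ConjClasses.mk_eq_mk_iff_isConj.mp (hout.trans hK.symm)⟩
    · rintro ⟨hx, hc⟩
      exact ⟨hx, (ConjClasses.mk_eq_mk_iff_isConj.mpr hc).symm.trans hout⟩
  rw [key H₁, key H₂]
  exact Finset.sum_congr rfl (fun K _ => h _)

omit [Finite G] in
/-- The number of fixed points of `g` on `G ⧸ H`, multiplied by `|H|`. -/
lemma card_fixed_mul (H : Subgroup G) (g : G) :
    Nat.card {y : G ⧸ H // g • y = y} * Nat.card H =
      Nat.card (Subgroup.centralizer {g⁻¹}) * Nat.card {h : G // h ∈ H ∧ IsConj g⁻¹ h} := by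
  classical
  have hpre : (QuotientGroup.mk : G → G ⧸ H) ⁻¹' {y | g • y = y} = {x : G | x⁻¹ * g⁻¹ * x ∈ H} := by
    ext x
    simp only [Set.mem_preimage, Set.mem_setOf_eq]
    have hs : g • (QuotientGroup.mk x : G ⧸ H) = QuotientGroup.mk (g * x) := rfl
    rw [hs, QuotientGroup.eq]
    constructor
    · intro hx; convert hx using 1; group
    · intro hx; convert hx using 1; group
  have h1 : Nat.card {y : G ⧸ H // g • y = y} * Nat.card H
      = Nat.card {x : G // x⁻¹ * g⁻¹ * x ∈ H} := by
    rw [mul_comm]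
    exact (card_preimage_mk H {y | g • y = y}).symm.trans (Nat.card_congr (Equiv.setCongr hpre))
  have h2 : Nat.card {x : G // x⁻¹ * g⁻¹ * x ∈ H} = Nat.card {x : G // x * g⁻¹ * x⁻¹ ∈ H} :=
    Nat.card_congr (Equiv.subtypeEquiv (Equiv.inv G) (fun x => by simp))
  rw [h1, h2, card_conj_in H g⁻¹]

/-- Gassmann equivalent subgroups have the same number of fixed points for every `g` acting
on the coset spaces. -/
lemma card_fixed_eq {H₁ H₂ : Subgroup G} (h : H₁.IsGassmannEquivalent H₂) (g : G) :
    Nat.card {y : G ⧸ H₁ // g • y = y} = Nat.card {y : G ⧸ H₂ // g • y = y} := by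
  have e1 := card_fixed_mul H₁ g
  have e2 := card_fixed_mul H₂ g
  rw [← h g⁻¹, ← e1, card_eq_of_gassmann h] at e2
  have hpos : 0 < Nat.card H₂ := Nat.card_pos
  exact (Nat.eq_of_mul_eq_mul_right hpos e2).symm

/-- Counting fixed points of `g₀ ^ m` by periods of points. -/
lemma card_fixed_eq_sum_periods {X : Type*} [Finite X] [MulAction G X] (g₀ : G) {m : ℕ}
    (hm : m ≠ 0) :
    Nat.card {y : X // g₀ ^ m • y = y} =
      ∑ d ∈ m.divisors, Nat.card {y : X // MulAction.period g₀ y = d} := by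
  classical
  have := Fintype.ofFinite X
  simp only [Nat.card_eq_fintype_card, Fintype.card_subtype]
  have h1 : (Finset.univ.filter (fun y : X => g₀ ^ m • y = y))
      = Finset.univ.filter (fun y : X => MulAction.period g₀ y ∣ m) := by
    refine Finset.filter_congr (fun y _ => ?_)
    simp [MulAction.pow_smul_eq_iff_period_dvd]
  rw [h1]
  rw [Finset.card_eq_sum_card_fiberwise
    (f := fun y : X => MulAction.period g₀ y) (t := m.divisors)
    (fun y hy => Nat.mem_divisors.mpr ⟨(Finset.mem_filter.mp hy).2, hm⟩)]
  refine Finset.sum_congr rfl (fun d hd => ?_)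
  congr 1
  rw [Finset.filter_filter]
  refine Finset.filter_congr (fun y _ => ?_)
  constructor
  · rintro ⟨_, h2⟩; exact h2
  · intro h2; exact ⟨by simp only []; rw [h2]; exact (Nat.mem_divisors.mp hd).1, h2⟩

/-- If two finite `G`-sets have the same number of fixed points for every group element, then
they have the same number of points of any given period `m ≠ 0` w.r.t. any `g₀`. -/
lemma card_period_eq {X₁ X₂ : Type*} [Finite X₁] [Finite X₂] [MulAction G X₁] [MulAction G X₂]
    (g₀ : G)
    (hfix : ∀ g : G, Nat.card {y : X₁ // g • y = y} = Nat.card {y : X₂ // g • y = y})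
    (m : ℕ) (hm : m ≠ 0) :
    Nat.card {y : X₁ // MulAction.period g₀ y = m} =
      Nat.card {y : X₂ // MulAction.period g₀ y = m} := by
  induction m using Nat.strong_induction_on with
  | _ m ih =>
  have hsum : ∑ d ∈ m.divisors, Nat.card {y : X₁ // MulAction.period g₀ y = d}
      = ∑ d ∈ m.divisors, Nat.card {y : X₂ // MulAction.period g₀ y = d} := by
    rw [← card_fixed_eq_sum_periods g₀ hm, ← card_fixed_eq_sum_periods g₀ hm]
    exact hfix (g₀ ^ m)
  have hmem : m ∈ m.divisors := Nat.mem_divisors_self m hm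
  rw [← Finset.sum_erase_add _ _ hmem, ← Finset.sum_erase_add _ _ hmem] at hsum
  have herase : ∑ d ∈ m.divisors.erase m, Nat.card {y : X₁ // MulAction.period g₀ y = d}
      = ∑ d ∈ m.divisors.erase m, Nat.card {y : X₂ // MulAction.period g₀ y = d} := by
    refine Finset.sum_congr rfl (fun d hd => ?_)
    obtain ⟨hne, hdvd⟩ := Finset.mem_erase.mp hd
    have hdm : d ∣ m := (Nat.mem_divisors.mp hdvd).1
    exact ih d (lt_of_le_of_ne (Nat.le_of_dvd (Nat.pos_of_ne_zero hm) hdm) hne)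
      (fun h0 => hm (by rw [h0] at hdm; simpa using hdm))
  rw [herase] at hsum
  exact Nat.add_left_cancel (by linarith [hsum] : _)

/-- Map from left cosets to dosets, `xH ↦ H x⁻¹ C`. -/
def psi (H C : Subgroup G) : G ⧸ H → DoubleCoset.Quotient (H : Set G) (C : Set G) :=
  fun y => Quotient.liftOn' y (fun x => DoubleCoset.mk H C x⁻¹) (by
    intro a b hab
    have hab' : a⁻¹ * b ∈ H := QuotientGroup.leftRel_apply.mp hab
    refine (DoubleCoset.eq H C a⁻¹ b⁻¹).mpr ⟨b⁻¹ * a, ?_, 1, C.one_mem, by group⟩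
    simpa using H.inv_mem hab')

omit [Finite G] in
lemma psi_mk (H C : Subgroup G) (x : G) :
    psi H C (QuotientGroup.mk x) = DoubleCoset.mk H C x⁻¹ := rfl

omit [Finite G] in
lemma psi_eq_iff_orbit (H C : Subgroup G) (x z : G) :
    psi H C (QuotientGroup.mk x) = psi H C (QuotientGroup.mk z) ↔
      (QuotientGroup.mk x : G ⧸ H) ∈ MulAction.orbit C (QuotientGroup.mk z : G ⧸ H) := by
  rw [psi_mk, psi_mk, DoubleCoset.eq]
  constructor
  · rintro ⟨h, hh, c, hc, hzc⟩
    refine MulAction.mem_orbit_iff.mpr ⟨⟨c, hc⟩, ?_⟩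
    have hs : (⟨c, hc⟩ : C) • (QuotientGroup.mk z : G ⧸ H) = QuotientGroup.mk (c * z) := rfl
    rw [hs]
    refine (QuotientGroup.eq).mpr ?_
    have hx : x = c * z * h := by
      have := congrArg (fun w => w⁻¹) hzc
      simp only [mul_inv_rev, inv_inv] at this
      rw [this]; group
    rw [hx]
    have he : (c * z)⁻¹ * (c * z * h) = h := by group
    rw [he]; exact hh
  · intro hmem
    obtain ⟨⟨c, hc⟩, hcz⟩ := MulAction.mem_orbit_iff.mp hmem
    have hs : (⟨c, hc⟩ : C) • (QuotientGroup.mk z : G ⧸ H) = QuotientGroup.mk (c * z) := rfl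
    rw [hs] at hcz
    have hh : (c * z)⁻¹ * x ∈ H := (QuotientGroup.eq).mp hcz
    refine ⟨(c * z)⁻¹ * x, hh, c, hc, ?_⟩
    group

omit [Finite G] in
lemma psi_eq_iff_orbit' (H C : Subgroup G) (y : G ⧸ H) (z : G) :
    psi H C y = psi H C (QuotientGroup.mk z) ↔ y ∈ MulAction.orbit C (QuotientGroup.mk z : G ⧸ H) := by
  obtain ⟨x, rfl⟩ := QuotientGroup.mk_surjective y
  exact psi_eq_iff_orbit H C x z

/-- The cardinality of a double coset `H z⁻¹ C` is `|H|` times the size of the `C`-orbit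
of `zH` in `G ⧸ H`. -/
lemma card_doset_inv (H C : Subgroup G) (z : G) :
    Nat.card (DoubleCoset.doubleCoset z⁻¹ (H : Set G) (C : Set G)) =
      Nat.card H * Nat.card (MulAction.orbit C (QuotientGroup.mk z : G ⧸ H)) := by
  have hse : (QuotientGroup.mk : G → G ⧸ H) ⁻¹'
      ((MulAction.orbit C (QuotientGroup.mk z : G ⧸ H)) : Set (G ⧸ H))
      = (DoubleCoset.doubleCoset z⁻¹ (H : Set G) (C : Set G))⁻¹ := by
    ext x
    simp only [Set.mem_preimage, SetLike.mem_coe, Set.mem_inv]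
    rw [← psi_eq_iff_orbit H C x z, psi_mk, psi_mk, DoubleCoset.eq]
    rw [DoubleCoset.mem_doubleCoset]
    constructor
    · rintro ⟨h, hh, c, hc, he⟩
      refine ⟨h⁻¹, H.inv_mem hh, c⁻¹, C.inv_mem hc, ?_⟩
      rw [he]; group
    · rintro ⟨h, hh, c, hc, he⟩
      refine ⟨h⁻¹, H.inv_mem hh, c⁻¹, C.inv_mem hc, ?_⟩
      rw [he]; group
  have h1 : Nat.card (DoubleCoset.doubleCoset z⁻¹ (H : Set G) (C : Set G)) =
      Nat.card ↥((DoubleCoset.doubleCoset z⁻¹ (H : Set G) (C : Set G))⁻¹) := (Set.natCard_inv _).symm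
  rw [h1, ← hse, card_preimage_mk]

omit [Finite G] in
lemma quotToDoset_psi (H C : Subgroup G) (z : G) :
    DoubleCoset.quotToDoubleCoset H C (psi H C (QuotientGroup.mk z)) = DoubleCoset.doubleCoset z⁻¹ (H : Set G) (C : Set G) := by
  rw [psi_mk]
  unfold DoubleCoset.quotToDoubleCoset
  have h1 : DoubleCoset.mk H C (DoubleCoset.mk H C z⁻¹).out = DoubleCoset.mk H C z⁻¹ := DoubleCoset.out_eq' H C _
  have h2 := (DoubleCoset.eq H C _ _).mp h1
  obtain ⟨h, hh, c, hc, he⟩ := h2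
  exact (DoubleCoset.doubleCoset_eq_of_mem (DoubleCoset.mem_doubleCoset.mpr ⟨h, hh, c, hc, he⟩)).symm

lemma key_card (H C : Subgroup G) (y : G ⧸ H) :
    Nat.card (DoubleCoset.quotToDoubleCoset H C (psi H C y)) =
      Nat.card H * Nat.card (MulAction.orbit C y) := by
  obtain ⟨z, rfl⟩ := QuotientGroup.mk_surjective y
  rw [quotToDoset_psi, card_doset_inv]

lemma nat_card_sigma_const {ι : Type*} [Finite ι] {f : ι → Type*} [∀ i, Finite (f i)] (k : ℕ)
    (h : ∀ i, Nat.card (f i) = k) : Nat.card (Σ i, f i) = Nat.card ι * k := by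
  classical
  have h1 := Fintype.ofFinite ι
  have h2 : ∀ i, Fintype (f i) := fun i => Fintype.ofFinite _
  rw [Nat.card_eq_fintype_card, Fintype.card_sigma, Nat.card_eq_fintype_card]
  have : ∀ i : ι, Fintype.card (f i) = k := fun i => by rw [← Nat.card_eq_fintype_card]; exact h i
  simp [this, Finset.sum_const, Finset.card_univ, mul_comm]

/-- The number of double cosets of cardinality `k·|H|` times `k` equals the number of points
of `G ⧸ H` whose `C`-orbit has size `k`. -/
lemma card_doset_subtype_mul (H C : Subgroup G) (k : ℕ) :
    Nat.card {d : DoubleCoset.Quotient (H : Set G) (C : Set G) //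
        Nat.card (DoubleCoset.quotToDoubleCoset H C d) = k * Nat.card H} * k
      = Nat.card {y : G ⧸ H // Nat.card (MulAction.orbit C y) = k} := by
  classical
  have hfinD : Finite (DoubleCoset.Quotient (H : Set G) (C : Set G)) := Quotient.finite _
  have hHpos : Nat.card H ≠ 0 := Nat.card_pos.ne'
  set P : DoubleCoset.Quotient (H : Set G) (C : Set G) → Prop :=
    fun d => Nat.card (DoubleCoset.quotToDoubleCoset H C d) = k * Nat.card H with hP
  set S := {y : G ⧸ H // Nat.card (MulAction.orbit C y) = k} with hS
  have hΦP : ∀ y : S, P (psi H C y.1) := by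
    rintro ⟨y, hy⟩
    show Nat.card (DoubleCoset.quotToDoubleCoset H C (psi H C y)) = k * Nat.card H
    rw [key_card, hy, mul_comm]
  let Φ : S → {d // P d} := fun y => ⟨psi H C y.1, hΦP y⟩
  have hfib : ∀ d : {d // P d}, Nat.card {a : S // Φ a = d} = k := by
    rintro ⟨d0, hd0⟩
    set z := (Quotient.out d0)⁻¹ with hz
    have hpsi : psi H C (QuotientGroup.mk z) = d0 := by
      rw [psi_mk, hz, inv_inv]
      exact DoubleCoset.out_eq' H C d0
    have korb : Nat.card (MulAction.orbit C (QuotientGroup.mk z : G ⧸ H)) = k := by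
      have hk := key_card H C (QuotientGroup.mk z : G ⧸ H)
      rw [hpsi, hd0, mul_comm k] at hk
      exact (Nat.eq_of_mul_eq_mul_left (Nat.pos_of_ne_zero hHpos) hk).symm
    rw [← korb]
    refine Nat.card_congr ?_
    refine ⟨fun a => ⟨a.1.1, ?_⟩, fun w => ⟨⟨w.1, ?_⟩, ?_⟩, fun a => ?_, fun w => ?_⟩
    · have h3 : psi H C a.1.1 = d0 := congrArg Subtype.val a.2
      exact (psi_eq_iff_orbit' H C _ z).mp (h3.trans hpsi.symm)
    · have h4 : MulAction.orbit C w.1 = MulAction.orbit C (QuotientGroup.mk z : G ⧸ H) :=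
        MulAction.orbit_eq_iff.mpr w.2
      show Nat.card (MulAction.orbit C w.1) = k
      rw [h4]; exact korb
    · refine Subtype.ext ?_
      show psi H C w.1 = d0
      rw [(psi_eq_iff_orbit' H C _ z).mpr w.2, hpsi]
    · exact Subtype.ext (Subtype.ext rfl)
    · exact Subtype.ext rfl
  have hsig : Nat.card S = Nat.card {d // P d} * k := by
    rw [Nat.card_congr (Equiv.sigmaFiberEquiv Φ).symm]
    exact nat_card_sigma_const k hfib
  rw [hsig]

lemma card_orbit_zpowers {X : Type*} [MulAction G X] (g₀ : G) (y : X) :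
    Nat.card (MulAction.orbit (Subgroup.zpowers g₀) y) = MulAction.period g₀ y := by
  rw [Nat.card_congr (MulAction.orbitZPowersEquiv g₀ y), Nat.card_zmod,
    MulAction.period_eq_minimalPeriod]

end helpers

/-- (Gassmann) If `H₁` and `H₂` are Gassmann equivalent subgroups of a finite group `G`,
then for every cyclic subgroup `C` of `G` the coset types of `(G,H₁,C)` and `(G,H₂,C)`
coincide: for every `k`, the number of double cosets in `H₁\G/C` of cardinality `k·|H₁|`
equals the number of double cosets in `H₂\G/C` of cardinality `k·|H₂|`. -/
theorem coset_types_eq_of_gassmann (G : Type*) [Group G] [Finite G]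
    (H₁ H₂ : Subgroup G) (h : H₁.IsGassmannEquivalent H₂)
    (C : Subgroup G) (hC : IsCyclic C) (k : ℕ) :
    Nat.card {d : DoubleCoset.Quotient (H₁ : Set G) (C : Set G) //
        Nat.card (DoubleCoset.quotToDoubleCoset H₁ C d) = k * Nat.card H₁} =
      Nat.card {d : DoubleCoset.Quotient (H₂ : Set G) (C : Set G) //
        Nat.card (DoubleCoset.quotToDoubleCoset H₂ C d) = k * Nat.card H₂} := by
  classical
  obtain ⟨ζ, hζ⟩ := hC.exists_generator
  have hgen : Subgroup.zpowers (ζ : G) = C := by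
    refine le_antisymm ((Subgroup.zpowers_le).mpr ζ.2) (fun x hx => ?_)
    obtain ⟨n, hn⟩ := Subgroup.mem_zpowers_iff.mp (hζ ⟨x, hx⟩)
    exact Subgroup.mem_zpowers_iff.mpr ⟨n, by
      have := congrArg (Subtype.val) hn
      simpa using this⟩
  set g₀ : G := (ζ : G) with hg₀
  rcases eq_or_ne k 0 with rfl | hk
  · have hempty : ∀ H : Subgroup G, IsEmpty {d : DoubleCoset.Quotient (H : Set G) (C : Set G) //
        Nat.card (DoubleCoset.quotToDoubleCoset H C d) = 0 * Nat.card H} := by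
      intro H
      refine ⟨fun d => ?_⟩
      have hne : (DoubleCoset.quotToDoubleCoset H C d.1).Nonempty := ⟨_, DoubleCoset.mem_doubleCoset_self H C _⟩
      have : 0 < Nat.card (DoubleCoset.quotToDoubleCoset H C d.1) := by
        have : Nonempty (DoubleCoset.quotToDoubleCoset H C d.1) := hne.to_subtype
        exact Nat.card_pos
      rw [d.2, zero_mul] at this
      exact (lt_irrefl 0) this
    rw [@Nat.card_of_isEmpty _ (hempty H₁), @Nat.card_of_isEmpty _ (hempty H₂)]
  · rw [← hgen]
    have e1 := card_doset_subtype_mul H₁ (Subgroup.zpowers g₀) k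
    have e2 := card_doset_subtype_mul H₂ (Subgroup.zpowers g₀) k
    have eo : ∀ H : Subgroup G, Nat.card {y : G ⧸ H //
          Nat.card (MulAction.orbit (Subgroup.zpowers g₀) y) = k}
        = Nat.card {y : G ⧸ H // MulAction.period g₀ y = k} := by
      intro H
      exact Nat.card_congr (Equiv.subtypeEquivRight (fun y => Iff.of_eq (congrArg (· = k) (card_orbit_zpowers g₀ y))))
    have hper := card_period_eq (X₁ := G ⧸ H₁) (X₂ := G ⧸ H₂) g₀ (fun g => card_fixed_eq h g) k hk
    rw [eo H₁] at e1
    rw [eo H₂] at e2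
    rw [hper, ← e2] at e1
    exact Nat.eq_of_mul_eq_mul_right (Nat.pos_of_ne_zero hk) e1
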